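/- Fix integers K ≥ 1 and T ≥ 1, and equip ℝ^K with Lebesgue measure. For each t = 1, …, T let q_t be a probability density on ℝ^K and let L_t : ℝ^K → (0,∞) be measurable with q_t·|log L_t| integrable. Let p_1 be a probability density on ℝ^K and, for t = 2, …, T, let p_t : ℝ^K × ℝ^K → [0,∞) be a measurable transition density (θ ↦ p_t(θ, θ′) is a probability density for every θ′). Let P(θ_1, …, θ_T) = p_1(θ_1)·∏_{t=2}^T p_t(θ_t, θ_{t−1}) and Q(θ_1, …, θ_T) = ∏_{t=1}^T q_t(θ_t); assume the evidence Z = ∫_{(ℝ^K)^T} P(θ_{1:T}) · ∏_{t=1}^T L_t(θ_t) dθ_{1:T} satisfies 0 < Z < ∞, that Q = 0 a.e. on {P = 0}, that Q·|log(Q/P)| is integrable, and that for t = 2, …, T the map θ′ ↦ KL(q_t ‖ p_t(·, θ′)) is defined q_{t−1}-a.e. and q_{t−1}-integrable. Then the log evidence satisfies the T-stage evidence lower bound: log Z ≥ [−KL(q_1 ‖ p_1) + ∫ q_1 · log L_1] + Σ_{t=2}^T [ −∫_{ℝ^K} q_{t−1}(θ′) · KL(q_t ‖ p_t(·, θ′))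 dθ′ + ∫ q_t · log L_t ], i.e., the single-stage ELBO for the first stage plus the temporally dependent ELBO terms for the follow-up stages. -/

import Mathlib

open MeasureTheory Real

section Aux

variable {α : Type*} [MeasureSpace α] [SigmaFinite (volume : Measure α)]
variable {ι : Type*} [Fintype ι] [DecidableEq ι]

/-- fold a single-coordinate factor into a product of coordinatewise functions -/
lemma prod_mul_single (q : ι → α → ℝ) (s : ι) (g : α → ℝ) (θ : ι → α) :
    (∏ i, q i (θ i)) * g (θ s)
      = ∏ i, Function.update q s (fun x => q s x * g x) i (θ i) := by
  rw [← Finset.mul_prod_erase Finset.univ (fun i => q i (θ i)) (Finset.mem_univ s),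
      ← Finset.mul_prod_erase Finset.univ
        (fun i => Function.update q s (fun x => q s x * g x) i (θ i))
        (Finset.mem_univ s)]
  have h1 : ∏ i ∈ Finset.univ.erase s,
      Function.update q s (fun x => q s x * g x) i (θ i)
      = ∏ i ∈ Finset.univ.erase s, q i (θ i) :=
    Finset.prod_congr rfl (fun i hi => by
      rw [Function.update_of_ne (Finset.ne_of_mem_erase hi)])
  rw [h1, Function.update_self]
  ring

lemma marg1 (q : ι → α → ℝ) (hq1 : ∀ i, ∫ x, q i x = 1) (s : ι) (g : α → ℝ) :
    ∫ θ : ι → α, (∏ i, q i (θ i)) * g (θ s) = ∫ x, q s x * g x := by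
  simp_rw [prod_mul_single q s g]
  erw [integral_fintype_prod_eq_prod (μ := fun _ => volume) (Function.update q s (fun x => q s x * g x))]
  rw [← Finset.mul_prod_erase Finset.univ _ (Finset.mem_univ s), Function.update_self]
  have h1 : ∏ i ∈ Finset.univ.erase s,
      ∫ x, Function.update q s (fun x => q s x * g x) i x = 1 :=
    Finset.prod_eq_one (fun i hi => by
      rw [Function.update_of_ne (Finset.ne_of_mem_erase hi)]; exact hq1 i)
  rw [h1, mul_one]

lemma marg1_int (q : ι → α → ℝ) (hqi : ∀ i, Integrable (q i)) (s : ι) (g : α → ℝ)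
    (hg : Integrable (fun x => q s x * g x)) :
    Integrable (fun θ : ι → α => (∏ i, q i (θ i)) * g (θ s)) := by
  simp_rw [prod_mul_single q s g]
  refine Integrable.fintype_prod (f := Function.update q s (fun x => q s x * g x))
    (fun i => ?_)
  by_cases h : i = s
  · subst h; rw [Function.update_self]; exact hg
  · rw [Function.update_of_ne h]; exact hqi i

/-- `∫ q·|log(q/p)| ≤ ∫ q·log(q/p) + 2` for (sub)probability densities. -/
lemma abs_log_int_bound {m0 : MeasurableSpace α} {μ : Measure α} (q p : α → ℝ)
    (hq0 : ∀ x, 0 ≤ q x) (hp0 : ∀ x, 0 ≤ p x)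
    (hpint : Integrable p μ) (hp1 : ∫ x, p x ∂μ = 1)
    (hint : Integrable (fun x => q x * Real.log (q x / p x)) μ) :
    ∫ x, q x * |Real.log (q x / p x)| ∂μ
      ≤ (∫ x, q x * Real.log (q x / p x) ∂μ) + 2 := by
  set f : α → ℝ := fun x => q x * Real.log (q x / p x) with hf
  have hneg : ∀ x, max (-(f x)) 0 ≤ p x := by
    intro x
    rcases (hq0 x).eq_or_lt with hq | hq
    · simp [hf, ← hq, hp0 x]
    · by_cases hp : p x = 0
      · simp [hf, hp, Real.log_zero, hp0 x]
      · have hp' : 0 < p x := lt_of_le_of_ne (hp0 x) (Ne.symm hp)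
        have h1 : Real.log (p x / q x) ≤ p x / q x - 1 :=
          Real.log_le_sub_one_of_pos (div_pos hp' hq)
        have h2 : -(f x) = q x * Real.log (p x / q x) := by
          show -(q x * Real.log (q x / p x)) = _
          have : Real.log (p x / q x) = -Real.log (q x / p x) := by
            rw [← Real.log_inv, inv_div]
          rw [this]; ring
        refine max_le ?_ (hp0 x)
        rw [h2]
        calc q x * Real.log (p x / q x) ≤ q x * (p x / q x - 1) :=
              mul_le_mul_of_nonneg_left h1 (le_of_lt hq)
          _ = p x - q x := by field_simp
          _ ≤ p x := by linarith [le_of_lt hq]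
  have habs : ∀ x, q x * |Real.log (q x / p x)| = f x + 2 * max (-(f x)) 0 := by
    intro x
    have : q x * |Real.log (q x / p x)| = |f x| := by
      rw [hf, abs_mul, abs_of_nonneg (hq0 x)]
    rw [this]
    rcases le_or_gt 0 (f x) with h | h
    · rw [abs_of_nonneg h, max_eq_right (by linarith)]; ring
    · rw [abs_of_neg h, max_eq_left (by linarith)]; ring
  have hfneg : Integrable (fun x => max (-(f x)) 0) μ := hint.neg.pos_part
  calc ∫ x, q x * |Real.log (q x / p x)| ∂μ
      = ∫ x, (f x + 2 * max (-(f x)) 0) ∂μ := by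
        exact integral_congr_ae (Filter.Eventually.of_forall habs)
    _ = (∫ x, f x ∂μ) + 2 * ∫ x, max (-(f x)) 0 ∂μ := by
        rw [integral_add hint (hfneg.const_mul 2), integral_const_mul]
    _ ≤ (∫ x, f x ∂μ) + 2 * ∫ x, p x ∂μ := by
        have := integral_mono hfneg hpint hneg
        linarith
    _ = (∫ x, f x ∂μ) + 2 := by rw [hp1]; ring

/-- Gibbs / Jensen inequality: `∫ Q log(f/Q) ≤ log ∫ f`. -/
lemma gibbs_ineq {m0 : MeasurableSpace α} {μ : Measure α} (Q f : α → ℝ)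
    (hQ0 : ∀ x, 0 ≤ Q x) (hQint : Integrable Q μ) (hQ1 : ∫ x, Q x ∂μ = 1)
    (hf0 : ∀ x, 0 ≤ f x) (hfint : Integrable f μ) {Z : ℝ}
    (hZ : ∫ x, f x ∂μ = Z) (hZpos : 0 < Z)
    (hsupp : ∀ᵐ x ∂μ, f x = 0 → Q x = 0)
    (hint : Integrable (fun x => Q x * Real.log (f x / Q x)) μ) :
    ∫ x, Q x * Real.log (f x / Q x) ∂μ ≤ Real.log Z := by
  have key : ∀ᵐ x ∂μ, Q x * Real.log (f x / Q x)
      ≤ f x / Z - Q x + Q x * Real.log Z := by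
    filter_upwards [hsupp] with x hx
    rcases (hQ0 x).eq_or_lt with hQ | hQ
    · rw [← hQ]
      have : 0 ≤ f x / Z := div_nonneg (hf0 x) (le_of_lt hZpos)
      simpa using this
    · have hfx : 0 < f x := by
        rcases (hf0 x).eq_or_lt with h | h
        · exact absurd (hx h.symm).symm (ne_of_lt hQ)
        · exact h
      have hfq : 0 < f x / Q x := div_pos hfx hQ
      have h1 : Real.log (f x / Q x) = Real.log (f x / (Q x * Z)) + Real.log Z := by
        rw [← div_div, Real.log_div (ne_of_gt hfq) (ne_of_gt hZpos)]
        ring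
      have h2 : Real.log (f x / (Q x * Z)) ≤ f x / (Q x * Z) - 1 :=
        Real.log_le_sub_one_of_pos (div_pos hfx (mul_pos hQ hZpos))
      have h3 : Q x * (f x / (Q x * Z)) = f x / Z := by
        field_simp
      calc Q x * Real.log (f x / Q x)
          = Q x * Real.log (f x / (Q x * Z)) + Q x * Real.log Z := by rw [h1]; ring
        _ ≤ Q x * (f x / (Q x * Z) - 1) + Q x * Real.log Z := by
            have := mul_le_mul_of_nonneg_left h2 (le_of_lt hQ)
            linarith
        _ = f x / Z - Q x + Q x * Real.log Z := by rw [mul_sub, h3]; ring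
  have hrhs : Integrable (fun x => f x / Z - Q x + Q x * Real.log Z) μ :=
    ((hfint.div_const Z).sub hQint).add (hQint.mul_const _)
  have := integral_mono_ae hint hrhs key
  have hcalc : ∫ x, (f x / Z - Q x + Q x * Real.log Z) ∂μ = Real.log Z := by
    have i1 : Integrable (fun x => f x / Z - Q x) μ := (hfint.div_const Z).sub hQint
    have i2 : Integrable (fun x => Q x * Real.log Z) μ := hQint.mul_const _
    rw [integral_add i1 i2, integral_sub (hfint.div_const Z) hQint, integral_div,
        integral_mul_const, hZ, hQ1, div_self (ne_of_gt hZpos)]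
    ring
  linarith [hcalc ▸ this]

lemma vol_pi_fintype_irrel {δ : Type*} (F1 F2 : Fintype δ) {β : δ → Type*}
    [M : ∀ i, MeasureSpace (β i)] :
    (@MeasureSpace.pi δ F1 β M).volume = (@MeasureSpace.pi δ F2 β M).volume := by
  have h := Subsingleton.elim F1 F2
  subst h
  rfl

/-- Two-coordinate marginalization over a product (pi) space. -/
lemma marg2 (q : ι → α → ℝ) (hqm : ∀ i, Measurable (q i)) (hq0 : ∀ i x, 0 ≤ q i x)
    (hqi : ∀ i, Integrable (q i)) (hq1 : ∀ i, ∫ x, q i x = 1)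
    {t s : ι} (hts : ¬ t = s) (G : α → α → ℝ) (hG : Measurable (Function.uncurry G))
    (hsec : ∀ᵐ x' ∂(volume : Measure α), q s x' ≠ 0 → Integrable (fun x => q t x * G x x'))
    (hnorm : Integrable (fun x' => q s x' * ∫ x, q t x * |G x x'|)) :
    Integrable (fun θ : ι → α => (∏ i, q i (θ i)) * G (θ t) (θ s)) ∧
    ∫ θ : ι → α, (∏ i, q i (θ i)) * G (θ t) (θ s)
      = ∫ x', q s x' * ∫ x, q t x * G x x' := by
  classical
  letI F1 : Fintype {i // i = s} := Fintype.subtypeEq s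
  set tk : {i // ¬ i = s} := ⟨t, hts⟩ with htk
  set F' : α × ({i // ¬ i = s} → α) → ℝ :=
    fun z => q s z.1 * ((∏ i : {i // ¬ i = s}, q i.1 (z.2 i)) * G (z.2 tk) z.1) with hF'
  set e₁ := MeasurableEquiv.piEquivPiSubtypeProd (fun _ : ι => α) (fun i => i = s) with he₁
  set pu := MeasurableEquiv.piUnique (fun _ : {i // i = s} => α) with hpu
  set e := e₁.trans (pu.prodCongr (MeasurableEquiv.refl ({i // ¬ i = s} → α))) with he
  have hmp : MeasurePreserving e volume volume := by
    have h1 := volume_preserving_piEquivPiSubtypeProd (fun _ : ι => α) (fun i => i = s)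
    have hce : (⇑e : (ι → α) → α × ({i // ¬ i = s} → α))
        = ⇑(pu.prodCongr (MeasurableEquiv.refl ({i // ¬ i = s} → α))) ∘ ⇑e₁ :=
      funext fun θ => rfl
    rw [hce]
    refine MeasurePreserving.comp ?_ h1
    have h3 := (volume_preserving_piUnique (fun _ : {i // i = s} => α)).prod
      (MeasurePreserving.id (volume : Measure ({i // ¬ i = s} → α)))
    have h4 : (Prod.map (⇑pu) id :
        ({i // i = s} → α) × ({i // ¬ i = s} → α) → α × ({i // ¬ i = s} → α))
        = ⇑(pu.prodCongr (MeasurableEquiv.refl ({i // ¬ i = s} → α))) := by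
      funext z; rfl
    rw [h4] at h3
    convert h3 using 2
    · rfl
    rw [Measure.volume_eq_prod]
    congr 1
    exact vol_pi_fintype_irrel _ _
    exact Measure.volume_eq_prod _ _
  have hFe : (fun θ : ι → α => (∏ i, q i (θ i)) * G (θ t) (θ s)) = fun θ => F' (e θ) := by
    funext θ
    show (∏ i, q i (θ i)) * G (θ t) (θ s)
      = q s (θ s) * ((∏ i : {i // ¬ i = s}, q i.1 (θ i.1)) * G (θ t) (θ s))
    have hprod : (∏ i, q i (θ i))
        = q s (θ s) * ∏ i : {i // ¬ i = s}, q i.1 (θ i.1) := by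
      rw [← Finset.mul_prod_erase Finset.univ (fun i => q i (θ i)) (Finset.mem_univ s)]
      congr 1
      exact Finset.prod_subtype (Finset.univ.erase s)
        (fun x => by simp [Finset.mem_erase]) (fun i => q i (θ i))
    rw [hprod]; ring
  have hF'm : Measurable F' := by
    apply Measurable.mul
    · exact (hqm s).comp measurable_fst
    apply Measurable.mul
    · exact Finset.measurable_prod Finset.univ
        (fun i _ => (hqm i.1).comp ((measurable_pi_apply i).comp measurable_snd))
    · have : (fun z : α × ({i // ¬ i = s} → α) => G (z.2 tk) z.1)
          = Function.uncurry G ∘ (fun z => (z.2 tk, z.1)) := rfl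
      rw [this]
      exact hG.comp (((measurable_pi_apply tk).comp measurable_snd).prodMk measurable_fst)
  have hsec' : ∀ᵐ x' ∂(volume : Measure α),
      Integrable (fun y : {i // ¬ i = s} → α => F' (x', y)) volume := by
    filter_upwards [hsec] with x' hx'
    by_cases h0 : q s x' = 0
    · have : (fun y : {i // ¬ i = s} → α => F' (x', y)) = fun _ => 0 := by
        funext y; simp [hF', h0]
      rw [this]; exact integrable_zero _ _ _
    · have hint1 : Integrable (fun x => q t x * G x x') volume := hx' h0
      have h5 : Integrable
          (fun y : {i // ¬ i = s} → α =>
            (∏ i : {i // ¬ i = s}, q i.1 (y i)) * G (y tk) x') volume :=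
        marg1_int (fun i : {i // ¬ i = s} => q i.1) (fun i => hqi i.1) tk
          (fun x => G x x') hint1
      exact h5.const_mul (q s x')
  have hinner_abs : ∀ x', ∫ y : {i // ¬ i = s} → α, ‖F' (x', y)‖
      = q s x' * ∫ x, q t x * |G x x'| := by
    intro x'
    have h1 : ∀ y : {i // ¬ i = s} → α, ‖F' (x', y)‖
        = q s x' * ((∏ i : {i // ¬ i = s}, q i.1 (y i)) * |G (y tk) x'|) := by
      intro y
      rw [Real.norm_eq_abs, hF']
      rw [abs_mul, abs_mul, abs_of_nonneg (hq0 s x'),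
        abs_of_nonneg (Finset.prod_nonneg fun i _ => hq0 i.1 _)]
    simp_rw [h1]
    rw [integral_const_mul]
    congr 1
    exact marg1 (fun i : {i // ¬ i = s} => q i.1) (fun i => hq1 i.1) tk
      (fun x => |G x x'|)
  have hnorm' : Integrable
      (fun x' => ∫ y : {i // ¬ i = s} → α, ‖F' (x', y)‖) volume := by
    have heq : (fun x' => ∫ y : {i // ¬ i = s} → α, ‖F' (x', y)‖)
        = fun x' => q s x' * ∫ x, q t x * |G x x'| := funext hinner_abs
    rw [heq]; exact hnorm
  have hF'int : Integrable F' (volume : Measure (α × ({i // ¬ i = s} → α))) := by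
    rw [Measure.volume_eq_prod]
    exact (integrable_prod_iff hF'm.aestronglyMeasurable).mpr ⟨hsec', hnorm'⟩
  constructor
  · rw [hFe]
    exact (hmp.integrable_comp_emb e.measurableEmbedding).mpr hF'int
  · rw [hFe]
    have h6 : ∫ θ : ι → α, F' (e θ) = ∫ z, F' z :=
      hmp.integral_comp e.measurableEmbedding F'
    rw [h6]
    have h7 : ∫ z, F' z = ∫ x', ∫ y, F' (x', y) := by
      rw [← integral_prod F' (by rwa [Measure.volume_eq_prod] at hF'int)]
      rw [Measure.volume_eq_prod]
    rw [h7]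
    congr 1
    funext x'
    have h8 : ∫ y : {i // ¬ i = s} → α, F' (x', y)
        = q s x' * ∫ y : {i // ¬ i = s} → α,
            (∏ i : {i // ¬ i = s}, q i.1 (y i)) * G (y tk) x' := by
      simp only [hF']
      exact integral_const_mul _ _
    rw [h8]
    congr 1
    exact marg1 (fun i : {i // ¬ i = s} => q i.1) (fun i => hq1 i.1) tk (fun x => G x x')

end Aux

/-- The previous stage index: `t - 1` in `Fin T` (only used when `1 ≤ t`). -/
def prevStage' {T : ℕ} (t : Fin T) : Fin T :=
  ⟨t.val - 1, lt_of_le_of_lt (Nat.sub_le _ _) t.isLt⟩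

/-- **T-stage ELBO.** With stage-wise variational densities `q_t`,
positive measurable likelihoods `L_t`, a Markov prior
`P(θ) = p₁(θ₀)·∏_{t≥1} p_t(θ_t, θ_{t−1})` on `(ℝ^K)^T` (Lebesgue measure),
and evidence `Z = ∫ P(θ)·∏_t L_t(θ_t) dθ` with `0 < Z < ∞`, under the stated
support and integrability conditions, the log evidence admits the lower bound
`log Z ≥ [−KL(q₁‖p₁) + ∫ q₁ log L₁] + Σ_{t≥1} [−∫ q_{t−1}(θ′)·KL(q_t‖p_t(·,θ′)) dθ′ + ∫ q_t log L_t]`. -/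
theorem log_evidence_ge_multistage_elbo
    (K T : ℕ) (hK : 1 ≤ K) (hT : 0 < T)
    (q : Fin T → (Fin K → ℝ) → ℝ)
    (hq_meas : ∀ t, Measurable (q t))
    (hq_nonneg : ∀ t x, 0 ≤ q t x)
    (hq_int : ∀ t, ∫ x, q t x = 1)
    (L : Fin T → (Fin K → ℝ) → ℝ)
    (hL_meas : ∀ t, Measurable (L t))
    (hL_pos : ∀ t x, 0 < L t x)
    (hqL_int : ∀ t, Integrable (fun x => q t x * |Real.log (L t x)|))
    (p1 : (Fin K → ℝ) → ℝ)
    (hp1_meas : Measurable p1) (hp1_nonneg : ∀ x, 0 ≤ p1 x) (hp1_int : ∫ x, p1 x = 1)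
    (ptr : Fin T → (Fin K → ℝ) → (Fin K → ℝ) → ℝ)
    (hptr_meas : ∀ t : Fin T, 1 ≤ (t : ℕ) → Measurable (Function.uncurry (ptr t)))
    (hptr_nonneg : ∀ t : Fin T, 1 ≤ (t : ℕ) → ∀ x x', 0 ≤ ptr t x x')
    (hptr_density : ∀ t : Fin T, 1 ≤ (t : ℕ) → ∀ x', ∫ x, ptr t x x' = 1)
    (Q P : (Fin T → Fin K → ℝ) → ℝ)
    (hQ : Q = fun θ => ∏ t, q t (θ t))
    (hP : P = fun θ => p1 (θ ⟨0, hT⟩) *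
      ∏ t ∈ Finset.univ.filter (fun t : Fin T => 1 ≤ (t : ℕ)),
        ptr t (θ t) (θ (prevStage' t)))
    (hPL_int : Integrable (fun θ => P θ * ∏ t, L t (θ t))
      (volume : Measure (Fin T → Fin K → ℝ)))
    (Z : ℝ) (hZ : Z = ∫ θ : Fin T → Fin K → ℝ, P θ * ∏ t, L t (θ t))
    (hZ_pos : 0 < Z)
    (hQP_supp : ∀ᵐ θ ∂(volume : Measure (Fin T → Fin K → ℝ)), P θ = 0 → Q θ = 0)
    (hQP_int : Integrable (fun θ => Q θ * |Real.log (Q θ / P θ)|)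
      (volume : Measure (Fin T → Fin K → ℝ)))
    (KLt : Fin T → (Fin K → ℝ) → ℝ)
    (hKLt : ∀ t : Fin T, 1 ≤ (t : ℕ) → ∀ x',
      KLt t x' = ∫ x, q t x * Real.log (q t x / ptr t x x'))
    (hKL_defined : ∀ t : Fin T, 1 ≤ (t : ℕ) →
      ∀ᵐ x' ∂(volume : Measure (Fin K → ℝ)), q (prevStage' t) x' ≠ 0 →
        ((∀ᵐ x ∂(volume : Measure (Fin K → ℝ)), ptr t x x' = 0 → q t x = 0) ∧
          Integrable (fun x => q t x * |Real.log (q t x / ptr t x x')|)))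
    (hKL_int : ∀ t : Fin T, 1 ≤ (t : ℕ) →
      Integrable (fun x' => q (prevStage' t) x' * KLt t x')) :
    Real.log Z ≥
      (-(∫ x, q ⟨0, hT⟩ x * Real.log (q ⟨0, hT⟩ x / p1 x))
          + ∫ x, q ⟨0, hT⟩ x * Real.log (L ⟨0, hT⟩ x))
        + ∑ t ∈ Finset.univ.filter (fun t : Fin T => 1 ≤ (t : ℕ)),
            (-(∫ x', q (prevStage' t) x' * KLt t x')
              + ∫ x, q t x * Real.log (L t x)) := by
  classical
  subst hQ hP
  set t0 : Fin T := ⟨0, hT⟩ with ht0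
  set S : Finset (Fin T) := Finset.univ.filter (fun t : Fin T => 1 ≤ (t : ℕ)) with hS
  -- basic integrability of the densities
  have hq_integrable : ∀ t, Integrable (q t) := fun t =>
    integrable_of_integral_eq_one (hq_int t)
  have hptr_integrable : ∀ t : Fin T, 1 ≤ (t : ℕ) → ∀ x',
      Integrable (fun x => ptr t x x') := fun t ht x' =>
    integrable_of_integral_eq_one (hptr_density t ht x')
  have hmemS : ∀ t ∈ S, 1 ≤ (t : ℕ) := fun t ht => (Finset.mem_filter.mp ht).2
  have hprev_ne : ∀ t : Fin T, 1 ≤ (t : ℕ) → ¬ (t = prevStage' t) := by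
    intro t ht h
    have := congrArg Fin.val h
    simp only [prevStage'] at this
    omega
  -- abbreviations
  set Qf : (Fin T → Fin K → ℝ) → ℝ := fun θ => ∏ t, q t (θ t) with hQf
  set Pf : (Fin T → Fin K → ℝ) → ℝ := fun θ => p1 (θ t0) * ∏ t ∈ S, ptr t (θ t) (θ (prevStage' t)) with hPf
  set ff : (Fin T → Fin K → ℝ) → ℝ := fun θ => Pf θ * ∏ t, L t (θ t) with hff
  -- nonnegativity / measurability
  have hQ_nonneg : ∀ θ, 0 ≤ Qf θ := fun θ =>
    Finset.prod_nonneg (fun t _ => hq_nonneg t (θ t))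
  have hP_nonneg : ∀ θ, 0 ≤ Pf θ := fun θ =>
    mul_nonneg (hp1_nonneg _)
      (Finset.prod_nonneg (fun t ht => hptr_nonneg t (hmemS t ht) _ _))
  have hLprod_pos : ∀ θ : Fin T → Fin K → ℝ, 0 < ∏ t, L t (θ t) := fun θ =>
    Finset.prod_pos (fun t _ => hL_pos t (θ t))
  have hQm : Measurable Qf :=
    Finset.measurable_prod _ (fun t _ => (hq_meas t).comp (measurable_pi_apply t))
  have hPm : Measurable Pf := by
    apply Measurable.mul
    · exact hp1_meas.comp (measurable_pi_apply t0)
    · refine Finset.measurable_prod _ (fun t ht => ?_)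
      show Measurable (Function.uncurry (ptr t) ∘
        fun a : Fin T → Fin K → ℝ => (a t, a (prevStage' t)))
      exact (hptr_meas t (hmemS t ht)).comp
        ((measurable_pi_apply t).prodMk (measurable_pi_apply (prevStage' t)))
  -- sum splitting over Fin T
  have hfilter_not : Finset.univ.filter (fun t : Fin T => ¬ 1 ≤ (t : ℕ)) = {t0} := by
    ext t
    simp only [Finset.mem_filter, Finset.mem_univ, true_and, Finset.mem_singleton, not_le,
      Nat.lt_one_iff, ht0]
    constructor
    · intro h; exact Fin.ext h
    · intro h; rw [h]
  have hsum_split : ∀ (F : Fin T → ℝ), ∑ t, F t = F t0 + ∑ t ∈ S, F t := by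
    intro F
    rw [← Finset.sum_filter_add_sum_filter_not Finset.univ (fun t : Fin T => 1 ≤ (t : ℕ)) F,
      hfilter_not, Finset.sum_singleton, add_comm]
  -- stagewise L-integrability
  have hqL_int' : ∀ t, Integrable (fun x => q t x * Real.log (L t x)) := by
    intro t
    refine (hqL_int t).mono'
      (((hq_meas t).mul (Real.measurable_log.comp (hL_meas t))).aestronglyMeasurable) ?_
    refine Filter.Eventually.of_forall (fun x => ?_)
    rw [Real.norm_eq_abs, abs_mul, abs_of_nonneg (hq_nonneg t x)]
  have hI_L : ∀ t : Fin T, Integrable (fun θ : Fin T → Fin K → ℝ => Qf θ * Real.log (L t (θ t))) :=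
    fun t => marg1_int q hq_integrable t (fun x => Real.log (L t x)) (hqL_int' t)
  have hE_L : ∀ t : Fin T, ∫ θ : Fin T → Fin K → ℝ, Qf θ * Real.log (L t (θ t))
      = ∫ x, q t x * Real.log (L t x) :=
    fun t => marg1 q hq_int t (fun x => Real.log (L t x))
  -- the KL pieces for t ∈ S, via marg2
  have hKpiece : ∀ t : Fin T, 1 ≤ (t : ℕ) →
      Integrable (fun θ : Fin T → Fin K → ℝ =>
        Qf θ * Real.log (q t (θ t) / ptr t (θ t) (θ (prevStage' t)))) ∧
      ∫ θ : Fin T → Fin K → ℝ, Qf θ * Real.log (q t (θ t) / ptr t (θ t) (θ (prevStage' t)))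
        = ∫ x', q (prevStage' t) x' * ∫ x, q t x * Real.log (q t x / ptr t x x') := by
    intro t ht
    have hGm : Measurable (Function.uncurry
        (fun x x' => Real.log (q t x / ptr t x x'))) := by
      apply Real.measurable_log.comp
      exact ((hq_meas t).comp measurable_fst).div (hptr_meas t ht)
    have hsec : ∀ᵐ x' ∂(volume : Measure (Fin K → ℝ)), q (prevStage' t) x' ≠ 0 →
        Integrable (fun x => q t x * Real.log (q t x / ptr t x x')) := by
      filter_upwards [hKL_defined t ht] with x' hx' h0
      obtain ⟨-, hint⟩ := hx' h0
      refine hint.mono' ?_ ?_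
      · exact ((hq_meas t).mul (Real.measurable_log.comp
          ((hq_meas t).div ((hptr_meas t ht).comp
            (measurable_id.prodMk measurable_const))))).aestronglyMeasurable
      · refine Filter.Eventually.of_forall (fun x => ?_)
        rw [Real.norm_eq_abs, abs_mul, abs_of_nonneg (hq_nonneg t x)]
    have habs_bound : ∀ᵐ x' ∂(volume : Measure (Fin K → ℝ)), q (prevStage' t) x' ≠ 0 →
        ∫ x, q t x * |Real.log (q t x / ptr t x x')| ≤ KLt t x' + 2 := by
      filter_upwards [hKL_defined t ht, hsec] with x' hx' hsec' h0
      obtain ⟨-, hint⟩ := hx' h0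
      have := abs_log_int_bound (q t) (fun x => ptr t x x') (hq_nonneg t)
        (fun x => hptr_nonneg t ht x x') (hptr_integrable t ht x')
        (hptr_density t ht x') (hsec' h0)
      rw [← hKLt t ht x'] at this
      exact this
    have hnorm : Integrable (fun x' => q (prevStage' t) x'
        * ∫ x, q t x * |Real.log (q t x / ptr t x x')|) := by
      have hbm : Measurable (fun z : (Fin K → ℝ) × (Fin K → ℝ) =>
          q t z.1 * |Real.log (q t z.1 / ptr t z.1 z.2)|) := by
        apply Measurable.mul
        · exact (hq_meas t).comp measurable_fst
        · exact (Real.measurable_log.comp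
            (((hq_meas t).comp measurable_fst).div (hptr_meas t ht))).abs
      have hsm : StronglyMeasurable (fun x' : Fin K → ℝ =>
          ∫ x, q t x * |Real.log (q t x / ptr t x x')|) :=
        hbm.stronglyMeasurable.integral_prod_left'
      refine Integrable.mono'
        ((hKL_int t ht).add (((hq_integrable (prevStage' t)).const_mul 2)))
        ((((hq_meas (prevStage' t)).aestronglyMeasurable).mul
          hsm.aestronglyMeasurable)) ?_
      filter_upwards [habs_bound] with x' hb
      by_cases h0 : q (prevStage' t) x' = 0
      · simp [h0]
      · have hqpos : 0 < q (prevStage' t) x' :=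
          lt_of_le_of_ne (hq_nonneg _ _) (Ne.symm h0)
        have hint_nonneg : 0 ≤ ∫ x, q t x * |Real.log (q t x / ptr t x x')| :=
          integral_nonneg (fun x => mul_nonneg (hq_nonneg t x) (abs_nonneg _))
        rw [Real.norm_eq_abs, abs_mul, abs_of_nonneg (hq_nonneg _ _),
          abs_of_nonneg hint_nonneg]
        calc q (prevStage' t) x' * ∫ x, q t x * |Real.log (q t x / ptr t x x')|
            ≤ q (prevStage' t) x' * (KLt t x' + 2) :=
              mul_le_mul_of_nonneg_left (hb h0) (le_of_lt hqpos)
          _ = q (prevStage' t) x' * KLt t x' + 2 * q (prevStage' t) x' := by ring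
    exact marg2 q hq_meas hq_nonneg hq_integrable hq_int (hprev_ne t ht)
      (fun x x' => Real.log (q t x / ptr t x x')) hGm hsec hnorm
  have hI_K : ∀ t ∈ S, Integrable (fun θ : Fin T → Fin K → ℝ =>
      Qf θ * Real.log (q t (θ t) / ptr t (θ t) (θ (prevStage' t)))) :=
    fun t ht => (hKpiece t (hmemS t ht)).1
  have hE_K : ∀ t ∈ S, ∫ θ : Fin T → Fin K → ℝ,
      Qf θ * Real.log (q t (θ t) / ptr t (θ t) (θ (prevStage' t)))
      = ∫ x', q (prevStage' t) x' * KLt t x' := by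
    intro t ht
    rw [(hKpiece t (hmemS t ht)).2]
    congr 1
    funext x'
    rw [← hKLt t (hmemS t ht) x']
  -- identity 2 : KL decomposition (a.e.)
  have hid2 : ∀ᵐ θ ∂(volume : Measure (Fin T → Fin K → ℝ)), Qf θ * Real.log (Qf θ / Pf θ)
      = Qf θ * Real.log (q t0 (θ t0) / p1 (θ t0))
        + ∑ t ∈ S, Qf θ * Real.log (q t (θ t) / ptr t (θ t) (θ (prevStage' t))) := by
    filter_upwards [hQP_supp] with θ hθ
    by_cases hQ0 : Qf θ = 0
    · simp [hQ0]
    · have hP0 : Pf θ ≠ 0 := fun h => hQ0 (hθ h)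
      have hq_ne : ∀ t : Fin T, q t (θ t) ≠ 0 := by
        intro t
        exact Finset.prod_ne_zero_iff.mp hQ0 t (Finset.mem_univ t)
      have hp1_ne : p1 (θ t0) ≠ 0 := fun h => hP0 (by rw [hPf]; simp [h])
      have hptr_ne : ∀ t ∈ S, ptr t (θ t) (θ (prevStage' t)) ≠ 0 := by
        intro t ht h
        apply hP0
        rw [hPf]
        simp only
        rw [Finset.prod_eq_zero ht h, mul_zero]
      have hlogQ : Real.log (Qf θ) = ∑ t, Real.log (q t (θ t)) :=
        Real.log_prod (fun t _ => hq_ne t)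
      have hlogP : Real.log (Pf θ) = Real.log (p1 (θ t0))
          + ∑ t ∈ S, Real.log (ptr t (θ t) (θ (prevStage' t))) := by
        rw [hPf]
        simp only
        rw [Real.log_mul hp1_ne (Finset.prod_ne_zero_iff.mpr hptr_ne),
          Real.log_prod hptr_ne]
      have hsplitq : ∑ t, Real.log (q t (θ t))
          = Real.log (q t0 (θ t0)) + ∑ t ∈ S, Real.log (q t (θ t)) :=
        hsum_split _
      rw [Real.log_div hQ0 hP0, hlogQ, hlogP, hsplitq,
        Real.log_div (hq_ne t0) hp1_ne]
      have : ∀ t ∈ S, Qf θ * Real.log (q t (θ t) / ptr t (θ t) (θ (prevStage' t)))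
          = Qf θ * Real.log (q t (θ t))
            - Qf θ * Real.log (ptr t (θ t) (θ (prevStage' t))) := by
        intro t ht
        rw [Real.log_div (hq_ne t) (hptr_ne t ht)]
        ring
      rw [Finset.sum_congr rfl this, Finset.sum_sub_distrib, ← Finset.mul_sum,
        ← Finset.mul_sum]
      ring
  -- identity 1 : ELBO decomposition (a.e.)
  have hid1 : ∀ᵐ θ ∂(volume : Measure (Fin T → Fin K → ℝ)), Qf θ * Real.log (ff θ / Qf θ)
      = -(Qf θ * Real.log (Qf θ / Pf θ))
        + ∑ t, Qf θ * Real.log (L t (θ t)) := by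
    filter_upwards [hQP_supp] with θ hθ
    by_cases hQ0 : Qf θ = 0
    · simp [hQ0]
    · have hP0 : Pf θ ≠ 0 := fun h => hQ0 (hθ h)
      have hf0 : ff θ ≠ 0 := by
        rw [hff]
        exact mul_ne_zero hP0 (ne_of_gt (hLprod_pos θ))
      have hlogf : Real.log (ff θ) = Real.log (Pf θ) + ∑ t, Real.log (L t (θ t)) := by
        rw [hff]
        simp only
        rw [Real.log_mul hP0 (ne_of_gt (hLprod_pos θ)),
          Real.log_prod (fun t _ => ne_of_gt (hL_pos t (θ t)))]
      rw [Real.log_div hf0 hQ0, Real.log_div hQ0 hP0, hlogf, ← Finset.mul_sum]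
      ring
  -- integrability of the pieces
  have hI_QP : Integrable (fun θ : Fin T → Fin K → ℝ => Qf θ * Real.log (Qf θ / Pf θ)) := by
    refine hQP_int.mono'
      ((hQm.mul (Real.measurable_log.comp (hQm.div hPm))).aestronglyMeasurable) ?_
    refine Filter.Eventually.of_forall (fun θ => ?_)
    rw [Real.norm_eq_abs, abs_mul, abs_of_nonneg (hQ_nonneg θ)]
  have hI_K1 : Integrable (fun θ : Fin T → Fin K → ℝ =>
      Qf θ * Real.log (q t0 (θ t0) / p1 (θ t0))) := by
    have heq : (fun θ : Fin T → Fin K → ℝ => Qf θ * Real.log (q t0 (θ t0) / p1 (θ t0)))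
        =ᵐ[volume] fun θ => Qf θ * Real.log (Qf θ / Pf θ)
          - ∑ t ∈ S, Qf θ * Real.log (q t (θ t) / ptr t (θ t) (θ (prevStage' t))) := by
      filter_upwards [hid2] with θ h
      rw [h]; ring
    exact (hI_QP.sub (integrable_finset_sum S hI_K)).congr heq.symm
  have hI_fQ : Integrable (fun θ : Fin T → Fin K → ℝ => Qf θ * Real.log (ff θ / Qf θ)) := by
    have heq : (fun θ : Fin T → Fin K → ℝ => Qf θ * Real.log (ff θ / Qf θ))
        =ᵐ[volume] fun θ => -(Qf θ * Real.log (Qf θ / Pf θ))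
          + ∑ t, Qf θ * Real.log (L t (θ t)) := hid1
    have hI_negQP : Integrable (fun θ : Fin T → Fin K → ℝ =>
        -(Qf θ * Real.log (Qf θ / Pf θ))) := hI_QP.neg
    exact (hI_negQP.add (integrable_finset_sum Finset.univ
      (fun t _ => hI_L t))).congr heq.symm
  -- Gibbs inequality
  have hQint : Integrable Qf := Integrable.fintype_prod (f := q) hq_integrable
  have hQ1 : ∫ θ : Fin T → Fin K → ℝ, Qf θ = 1 := by
    rw [hQf]
    erw [integral_fintype_prod_eq_prod (μ := fun _ => volume) (fun t x => q t x)]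
    exact Finset.prod_eq_one (fun t _ => hq_int t)
  have hsupp' : ∀ᵐ θ ∂(volume : Measure (Fin T → Fin K → ℝ)), ff θ = 0 → Qf θ = 0 := by
    filter_upwards [hQP_supp] with θ hθ h
    apply hθ
    rcases mul_eq_zero.mp h with h1 | h2
    · exact h1
    · exact absurd h2 (ne_of_gt (hLprod_pos θ))
  have hGibbs : ∫ θ : Fin T → Fin K → ℝ, Qf θ * Real.log (ff θ / Qf θ) ≤ Real.log Z :=
    gibbs_ineq Qf ff hQ_nonneg hQint hQ1
      (fun θ => mul_nonneg (hP_nonneg θ) (le_of_lt (hLprod_pos θ)))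
      hPL_int hZ.symm hZ_pos hsupp' hI_fQ
  -- integral identities
  have hEq1 : ∫ θ : Fin T → Fin K → ℝ, Qf θ * Real.log (ff θ / Qf θ)
      = -(∫ θ : Fin T → Fin K → ℝ, Qf θ * Real.log (Qf θ / Pf θ))
        + ∑ t, ∫ θ : Fin T → Fin K → ℝ, Qf θ * Real.log (L t (θ t)) := by
    have hI_negQP : Integrable (fun θ : Fin T → Fin K → ℝ =>
        -(Qf θ * Real.log (Qf θ / Pf θ))) := hI_QP.neg
    rw [integral_congr_ae hid1,
      integral_add hI_negQP (integrable_finset_sum Finset.univ (fun t _ => hI_L t)),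
      integral_neg, integral_finset_sum Finset.univ (fun t _ => hI_L t)]
  have hEq2 : ∫ θ : Fin T → Fin K → ℝ, Qf θ * Real.log (Qf θ / Pf θ)
      = (∫ θ : Fin T → Fin K → ℝ, Qf θ * Real.log (q t0 (θ t0) / p1 (θ t0)))
        + ∑ t ∈ S, ∫ θ : Fin T → Fin K → ℝ,
            Qf θ * Real.log (q t (θ t) / ptr t (θ t) (θ (prevStage' t))) := by
    rw [integral_congr_ae hid2,
      integral_add hI_K1 (integrable_finset_sum S hI_K),
      integral_finset_sum S hI_K]
  have hE_K1 : ∫ θ : Fin T → Fin K → ℝ, Qf θ * Real.log (q t0 (θ t0) / p1 (θ t0))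
      = ∫ x, q t0 x * Real.log (q t0 x / p1 x) :=
    marg1 q hq_int t0 (fun x => Real.log (q t0 x / p1 x))
  -- final assembly
  have hsumL : ∑ t, ∫ θ : Fin T → Fin K → ℝ, Qf θ * Real.log (L t (θ t))
      = (∫ x, q t0 x * Real.log (L t0 x))
        + ∑ t ∈ S, ∫ x, q t x * Real.log (L t x) := by
    rw [hsum_split (fun t => ∫ θ : Fin T → Fin K → ℝ, Qf θ * Real.log (L t (θ t))), hE_L t0]
    congr 1
    exact Finset.sum_congr rfl (fun t _ => hE_L t)
  have hsumK : ∑ t ∈ S, ∫ θ : Fin T → Fin K → ℝ,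
      Qf θ * Real.log (q t (θ t) / ptr t (θ t) (θ (prevStage' t)))
      = ∑ t ∈ S, ∫ x', q (prevStage' t) x' * KLt t x' :=
    Finset.sum_congr rfl hE_K
  rw [hEq1, hEq2, hE_K1, hsumL, hsumK] at hGibbs
  have hfinal : ∑ t ∈ S, (-(∫ x', q (prevStage' t) x' * KLt t x')
      + ∫ x, q t x * Real.log (L t x))
      = -(∑ t ∈ S, ∫ x', q (prevStage' t) x' * KLt t x')
        + ∑ t ∈ S, ∫ x, q t x * Real.log (L t x) := by
    rw [Finset.sum_add_distrib, Finset.sum_neg_distrib]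
  rw [ge_iff_le, hfinal]
  linarith
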